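/- Let 𝒟 ⊆ 𝒞 be subcategories of 𝓑 satisfying condition (RCP) and suppose Ext²(C,D) = 0 for all C ∈ 𝒞 and D ∈ 𝒟. Then the right 𝒟-mutation 𝒞' := CoCone(𝒟,𝒞) ∩ 𝒟^⊥¹ is rigid, i.e. Ext¹(C'₁, C'₂) = 0 for all C'₁, C'₂ ∈ 𝒞'. -/

import Mathlib

open CategoryTheory Category Limits ZeroObject

universe v u

namespace CotorsionPaper

variable {B : Type u} [Category.{v} B] [Abelian B]

/-- `f, g` form a short exact sequence `0 → X → Y → Z → 0`. -/
def IsSES {X Y Z : B} (f : X ⟶ Y) (g : Y ⟶ Z) : Prop :=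
  ∃ w : f ≫ g = 0, (ShortComplex.mk f g w).ShortExact

/-- `Ext¹(X, Y) = 0`: every short exact sequence `0 → Y → E → X → 0` splits. -/
def Ext1Zero (X Y : B) : Prop :=
  ∀ ⦃E : B⦄ (i : Y ⟶ E) (p : E ⟶ X), IsSES i p → ∃ s : X ⟶ E, s ≫ p = 𝟙 X

/-- `Ext²(X, Y) = 0`, via dimension shifting: `Ext¹(K, Y) = 0` for any syzygy `K` of `X`. -/
def Ext2Zero (X Y : B) : Prop :=
  ∀ ⦃K P : B⦄ (i : K ⟶ P) (p : P ⟶ X), Projective P → IsSES i p → Ext1Zero K Y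

/-- A (strictly) full additive subcategory: closed under isomorphisms,
contains a zero object and is closed under finite direct sums. -/
structure AddSubcat (S : Set B) : Prop where
  zero_mem : (0 : B) ∈ S
  iso_closed : ∀ ⦃X Y : B⦄, (X ≅ Y) → X ∈ S → Y ∈ S
  sum_closed : ∀ ⦃X Y : B⦄, X ∈ S → Y ∈ S → (X ⊞ Y) ∈ S

/-- `S` is closed under direct summands (retracts). -/
def ClosedUnderSummands (S : Set B) : Prop :=
  ∀ ⦃X Y : B⦄ (r : X ⟶ Y) (s : Y ⟶ X), s ≫ r = 𝟙 Y → X ∈ S → Y ∈ S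

/-- `S` is rigid: `Ext¹(X, Y) = 0` for all `X, Y ∈ S`. -/
def Rigid (S : Set B) : Prop :=
  ∀ ⦃X⦄, X ∈ S → ∀ ⦃Y⦄, Y ∈ S → Ext1Zero X Y

/-- `S^⊥¹`. -/
def rightPerp (S : Set B) : Set B := {Y | ∀ ⦃X⦄, X ∈ S → Ext1Zero X Y}

/-- `^⊥¹S`. -/
def leftPerp (S : Set B) : Set B := {X | ∀ ⦃Y⦄, Y ∈ S → Ext1Zero X Y}

/-- `f : X ⟶ A` is a right `S`-approximation of `A`. -/
def IsRightApprox (S : Set B) {X A : B} (f : X ⟶ A) : Prop :=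
  X ∈ S ∧ ∀ ⦃X' : B⦄, X' ∈ S → ∀ g : X' ⟶ A, ∃ h : X' ⟶ X, h ≫ f = g

def ContravariantlyFinite (S : Set B) : Prop :=
  ∀ A : B, ∃ (X : B) (f : X ⟶ A), IsRightApprox S f

/-- `f : A ⟶ X` is a left `S`-approximation of `A`. -/
def IsLeftApprox (S : Set B) {A X : B} (f : A ⟶ X) : Prop :=
  X ∈ S ∧ ∀ ⦃X' : B⦄, X' ∈ S → ∀ g : A ⟶ X', ∃ h : X ⟶ X', f ≫ h = g

def CovariantlyFinite (S : Set B) : Prop :=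
  ∀ A : B, ∃ (X : B) (f : A ⟶ X), IsLeftApprox S f

/-- `(U, V)` is a cotorsion pair. -/
structure CotorsionPair (U V : Set B) : Prop where
  summands_left : ClosedUnderSummands U
  summands_right : ClosedUnderSummands V
  ext : ∀ ⦃X⦄, X ∈ U → ∀ ⦃Y⦄, Y ∈ V → Ext1Zero X Y
  resol : ∀ X : B, ∃ (VX UX : B) (i : VX ⟶ UX) (p : UX ⟶ X),
    VX ∈ V ∧ UX ∈ U ∧ IsSES i p
  coresol : ∀ X : B, ∃ (VX UX : B) (i : X ⟶ VX) (p : VX ⟶ UX),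
    VX ∈ V ∧ UX ∈ U ∧ IsSES i p

/-- `CoCone(S, T)`. -/
def CoCone (S T : Set B) : Set B :=
  {X | ∃ (B' B'' : B) (i : X ⟶ B') (p : B' ⟶ B''), B' ∈ S ∧ B'' ∈ T ∧ IsSES i p}

/-- `Cone(S, T)`. -/
def Cone (S T : Set B) : Set B :=
  {X | ∃ (B' B'' : B) (i : B' ⟶ B'') (p : B'' ⟶ X), B' ∈ S ∧ B'' ∈ T ∧ IsSES i p}

/-- The subcategory `𝒫` of projective objects. -/
def projSet : Set B := {P | Projective P}

/-- The subcategory `ℐ` of injective objects. -/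
def injSet : Set B := {I | Injective I}

/-- `Ω𝒞`, the (first) syzygy of `𝒞`. -/
def Syz (C : Set B) : Set B := CoCone projSet C

/-- Condition (RCP): `𝒫 ⊆ 𝒞`, `𝒞` rigid, contravariantly finite,
closed under direct summands (and a full additive subcategory). -/
structure RCP (C : Set B) : Prop where
  add : AddSubcat C
  proj_mem : ∀ ⦃P : B⦄, Projective P → P ∈ C
  rigid : Rigid C
  contra : ContravariantlyFinite C
  summands : ClosedUnderSummands C

/-- `f` factors through an object of `S`. -/
def FactorsThru (S : Set B) {X Y : B} (f : X ⟶ Y) : Prop :=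
  ∃ (Z : B) (g : X ⟶ Z) (h : Z ⟶ Y), Z ∈ S ∧ g ≫ h = f

/-- The ideal of morphisms of the full subcategory on `H` factoring through an object of `S`. -/
def idealRel (H S : Set B) : HomRel (ObjectProperty.FullSubcategory (fun X : B => X ∈ H)) :=
  fun X Y f g => FactorsThru S (show X.obj ⟶ Y.obj from f.hom - g.hom)

/-- The ideal quotient `H/S`. -/
abbrev HeartCat (H S : Set B) := CategoryTheory.Quotient (idealRel H S)

/-- The quotient functor `H → H/S`. -/
abbrev heartQ (H S : Set B) : ObjectProperty.FullSubcategory (fun X : B => X ∈ H) ⥤ HeartCat H S :=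
  CategoryTheory.Quotient.functor _

/-- The zero morphism in the ideal quotient `H/S`. -/
def heartZero (H S : Set B) (X Y : HeartCat H S) : X ⟶ Y :=
  (heartQ H S).map (0 : X.as ⟶ Y.as)

/-- `κ` is a kernel of `φ` in the ideal quotient `H/S`. -/
structure IsKernelArrow {H S : Set B} {K X Y : HeartCat H S}
    (κ : K ⟶ X) (φ : X ⟶ Y) : Prop where
  w : κ ≫ φ = heartZero H S K Y
  lift : ∀ ⦃T : HeartCat H S⦄ (t : T ⟶ X), t ≫ φ = heartZero H S T Y →
    ∃! u : T ⟶ K, u ≫ κ = t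

/-- `π` is a cokernel of `φ` in the ideal quotient `H/S`. -/
structure IsCokernelArrow {H S : Set B} {X Y Q : HeartCat H S}
    (φ : X ⟶ Y) (π : Y ⟶ Q) : Prop where
  w : φ ≫ π = heartZero H S X Q
  desc : ∀ ⦃T : HeartCat H S⦄ (t : Y ⟶ T), φ ≫ t = heartZero H S X T →
    ∃! u : Q ⟶ T, π ≫ u = t

/-- The class of epimorphisms in `H/S` whose kernel object lies in `A`. -/
def epiClassWithKernelIn (H S A : Set B) : MorphismProperty (HeartCat H S) :=
  fun X Y φ => Epi φ ∧ ∃ (K : HeartCat H S) (κ : K ⟶ X),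
    K.as.obj ∈ A ∧ IsKernelArrow κ φ

/-- The class of monomorphisms in `H/S` whose cokernel object lies in `A`. -/
def monoClassWithCokernelIn (H S A : Set B) : MorphismProperty (HeartCat H S) :=
  fun X Y φ => Mono φ ∧ ∃ (Q : HeartCat H S) (π : Y ⟶ Q),
    Q.as.obj ∈ A ∧ IsCokernelArrow φ π

/-- The diagram `(⋄)` associated with a morphism `f : Y ⟶ X`. -/
structure DiamondDiagram {Y X : B} (f : Y ⟶ X) {OmX PX Z₁ IY SgY Z₂ : B}
    (q : OmX ⟶ PX) (p : PX ⟶ X) (j : OmX ⟶ Z₁) (g : Z₁ ⟶ Y)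
    (i : Y ⟶ IY) (c : IY ⟶ SgY) (h : X ⟶ Z₂) (e : Z₂ ⟶ SgY)
    (u : Z₁ ⟶ PX) (v : IY ⟶ Z₂) : Prop where
  projPX : Projective PX
  injIY : Injective IY
  ses_proj : IsSES q p
  ses_pullback : IsSES j g
  ses_inj : IsSES i c
  ses_pushout : IsSES h e
  comm₁ : j ≫ u = q
  comm₂ : u ≫ p = g ≫ f
  comm₃ : f ≫ h = i ≫ v
  comm₄ : v ≫ e = c

/-- The class of morphisms `f : Y ⟶ X` admitting a diagram `(⋄)` with
`Z₁ ∈ ZCond` and `h` factoring through an object of `HCond`. -/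
def Rclass (ZCond HCond : Set B) : MorphismProperty B :=
  fun Y X f => ∃ (OmX PX Z₁ IY SgY Z₂ : B) (q : OmX ⟶ PX) (p : PX ⟶ X)
    (j : OmX ⟶ Z₁) (g : Z₁ ⟶ Y) (i : Y ⟶ IY) (c : IY ⟶ SgY)
    (h : X ⟶ Z₂) (e : Z₂ ⟶ SgY) (u : Z₁ ⟶ PX) (v : IY ⟶ Z₂),
    DiamondDiagram f q p j g i c h e u v ∧ Z₁ ∈ ZCond ∧ FactorsThru HCond h

/-- The class of morphisms `f : Y ⟶ X` admitting a diagram `(⋄)` with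
`g` factoring through an object of `GCond` and `h` through an object of `HCond`. -/
def RtildeClass (GCond HCond : Set B) : MorphismProperty B :=
  fun Y X f => ∃ (OmX PX Z₁ IY SgY Z₂ : B) (q : OmX ⟶ PX) (p : PX ⟶ X)
    (j : OmX ⟶ Z₁) (g : Z₁ ⟶ Y) (i : Y ⟶ IY) (c : IY ⟶ SgY)
    (h : X ⟶ Z₂) (e : Z₂ ⟶ SgY) (u : Z₁ ⟶ PX) (v : IY ⟶ Z₂),
    DiamondDiagram f q p j g i c h e u v ∧ FactorsThru GCond g ∧ FactorsThru HCond h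

/-- The objects of the heart `ℋ` of a cotorsion pair `(U, V)`. -/
def HeartObjects (U V : Set B) : Set B :=
  {X | (∃ (VX UX : B) (i : VX ⟶ UX) (p : UX ⟶ X),
          IsSES i p ∧ VX ∈ V ∧ UX ∈ U ∩ V) ∧
       (∃ (VX UX : B) (i : X ⟶ VX) (p : VX ⟶ UX),
          IsSES i p ∧ VX ∈ U ∩ V ∧ UX ∈ U)}


/-! ### Auxiliary lemmas for statement 18 -/

section Aux

lemma IsSES.mono_f {X Y Z : B} {f : X ⟶ Y} {g : Y ⟶ Z} (h : IsSES f g) : Mono f := by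
  obtain ⟨w, hse⟩ := h; exact hse.mono_f

lemma IsSES.epi_g {X Y Z : B} {f : X ⟶ Y} {g : Y ⟶ Z} (h : IsSES f g) : Epi g := by
  obtain ⟨w, hse⟩ := h; exact hse.epi_g

lemma IsSES.w {X Y Z : B} {f : X ⟶ Y} {g : Y ⟶ Z} (h : IsSES f g) : f ≫ g = 0 :=
  h.choose

/-- Lifting against the kernel `f` of `g`. -/
lemma IsSES.lift {X Y Z : B} {f : X ⟶ Y} {g : Y ⟶ Z} (h : IsSES f g)
    {T : B} (t : T ⟶ Y) (ht : t ≫ g = 0) : ∃ u : T ⟶ X, u ≫ f = t := by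
  obtain ⟨w, hse⟩ := h
  have : Mono (ShortComplex.mk f g w).f := hse.mono_f
  exact hse.exact.lift' t ht

/-- Descending along the cokernel `g` of `f`. -/
lemma IsSES.desc {X Y Z : B} {f : X ⟶ Y} {g : Y ⟶ Z} (h : IsSES f g)
    {T : B} (t : Y ⟶ T) (ht : f ≫ t = 0) : ∃ u : Z ⟶ T, g ≫ u = t := by
  obtain ⟨w, hse⟩ := h
  have : Epi (ShortComplex.mk f g w).g := hse.epi_g
  exact hse.exact.desc' t ht

lemma isSES_of_isColimit {X Y Z : B} {f : X ⟶ Y} {g : Y ⟶ Z} (w : f ≫ g = 0)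
    (hm : Mono f) (he : Epi g)
    (hc : IsColimit (CokernelCofork.ofπ g w)) : IsSES f g := by
  refine ⟨w, ?_⟩
  exact ShortComplex.ShortExact.mk'
    (ShortComplex.exact_of_g_is_cokernel (ShortComplex.mk f g w) hc) hm he

lemma isSES_of_isLimit {X Y Z : B} {f : X ⟶ Y} {g : Y ⟶ Z} (w : f ≫ g = 0)
    (hm : Mono f) (he : Epi g)
    (hc : IsLimit (KernelFork.ofι f w)) : IsSES f g := by
  refine ⟨w, ?_⟩
  exact ShortComplex.ShortExact.mk'
    (ShortComplex.exact_of_f_is_kernel (ShortComplex.mk f g w) hc) hm he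

/-- Make a short exact sequence out of a cokernel-type universal property. -/
lemma isSES_mk_coker {X Y Z : B} {f : X ⟶ Y} {g : Y ⟶ Z} (w : f ≫ g = 0)
    (hm : Mono f) (he : Epi g)
    (hd : ∀ {T : B} (t : Y ⟶ T), f ≫ t = 0 → ∃ u : Z ⟶ T, g ≫ u = t) : IsSES f g := by
  haveI := he
  exact isSES_of_isColimit w hm he
    (CokernelCofork.IsColimit.ofπ' g w
      (fun t ht => ⟨(hd t ht).choose, (hd t ht).choose_spec⟩))

/-- Make a short exact sequence out of a kernel-type universal property. -/
lemma isSES_mk_ker {X Y Z : B} {f : X ⟶ Y} {g : Y ⟶ Z} (w : f ≫ g = 0)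
    (hm : Mono f) (he : Epi g)
    (hl : ∀ {T : B} (t : T ⟶ Y), t ≫ g = 0 → ∃ u : T ⟶ X, u ≫ f = t) : IsSES f g := by
  haveI := hm
  exact isSES_of_isLimit w hm he
    (KernelFork.IsLimit.ofι' f w
      (fun t ht => ⟨(hl t ht).choose, (hl t ht).choose_spec⟩))

/-- A kernel inclusion of an epimorphism gives a short exact sequence. -/
lemma isSES_kernel {Y Z : B} (g : Y ⟶ Z) (he : Epi g) : IsSES (kernel.ι g) g :=
  isSES_of_isLimit (kernel.condition g) inferInstance he (kernelIsKernel g)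

/-- A cokernel projection of a monomorphism gives a short exact sequence. -/
lemma isSES_cokernel {X Y : B} (f : X ⟶ Y) (hm : Mono f) :
    IsSES f (cokernel.π f) :=
  isSES_of_isColimit (cokernel.condition f) hm inferInstance (cokernelIsCokernel f)

/-- A retraction of the monomorphism of a SES yields a section of the epimorphism. -/
lemma IsSES.section_of_retraction {X Y Z : B} {f : X ⟶ Y} {g : Y ⟶ Z} (h : IsSES f g)
    {ρ : Y ⟶ X} (hρ : f ≫ ρ = 𝟙 X) : ∃ s : Z ⟶ Y, s ≫ g = 𝟙 Z := by
  haveI := h.epi_g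
  obtain ⟨u, hu⟩ := h.desc (𝟙 Y - ρ ≫ f)
    (by simp [Preadditive.comp_sub, reassoc_of% hρ])
  refine ⟨u, ?_⟩
  have : g ≫ u ≫ g = g ≫ 𝟙 Z := by
    rw [← assoc, hu]
    simp [Preadditive.sub_comp, assoc, h.w]
  exact (cancel_epi g).mp this

/-- A section of the epimorphism of a SES yields a retraction of the monomorphism. -/
lemma IsSES.retraction_of_section {X Y Z : B} {f : X ⟶ Y} {g : Y ⟶ Z} (h : IsSES f g)
    {s : Z ⟶ Y} (hs : s ≫ g = 𝟙 Z) : ∃ ρ : Y ⟶ X, f ≫ ρ = 𝟙 X := by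
  haveI := h.mono_f
  obtain ⟨u, hu⟩ := h.lift (𝟙 Y - g ≫ s)
    (by simp [Preadditive.sub_comp, assoc, hs])
  refine ⟨u, ?_⟩
  have : (f ≫ u) ≫ f = 𝟙 X ≫ f := by
    rw [assoc, hu]
    simp [Preadditive.comp_sub, reassoc_of% h.w]
  exact (cancel_mono f).mp this

/-- Pulling back a SES along any morphism gives a SES. -/
lemma isSES_pullback {X₂ E X₁ K : B} {i : X₂ ⟶ E} {p : E ⟶ X₁} (h : IsSES i p) (ψ : K ⟶ X₁) :
    IsSES (pullback.lift i 0 (by simp [h.w]) : X₂ ⟶ pullback p ψ) (pullback.snd p ψ) := by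
  haveI := h.epi_g
  haveI := h.mono_f
  have hfst : pullback.lift i 0 (by simp [h.w]) ≫ pullback.fst p ψ = i :=
    pullback.lift_fst _ _ _
  have hmono : Mono (pullback.lift i 0 (by simp [h.w]) : X₂ ⟶ pullback p ψ) := by
    have : Mono (pullback.lift i 0 (by simp [h.w]) ≫ pullback.fst p ψ) := by
      rw [hfst]; infer_instance
    exact mono_of_mono _ (pullback.fst p ψ)
  refine isSES_mk_ker (pullback.lift_snd _ _ _) hmono inferInstance ?_
  intro T t ht
  have htp : (t ≫ pullback.fst p ψ) ≫ p = 0 := by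
    rw [assoc, pullback.condition, ← assoc, ht, zero_comp]
  obtain ⟨u, hu⟩ := h.lift (t ≫ pullback.fst p ψ) htp
  refine ⟨u, ?_⟩
  apply pullback.hom_ext
  · rw [assoc, hfst, hu]
  · rw [assoc, pullback.lift_snd, comp_zero, ht]

/-- Pushing out a SES along any morphism gives a SES. -/
lemma isSES_pushout {X₂ G K D₂ : B} {j : X₂ ⟶ G} {r : G ⟶ K} (h : IsSES j r) (a₂ : X₂ ⟶ D₂) :
    IsSES (pushout.inr j a₂ : D₂ ⟶ pushout j a₂)
      (pushout.desc r 0 (by simp [h.w]) : pushout j a₂ ⟶ K) := by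
  haveI := h.mono_f
  haveI := h.epi_g
  have hinl : pushout.inl j a₂ ≫ pushout.desc r 0 (by simp [h.w]) = r :=
    pushout.inl_desc _ _ _
  have hepi : Epi (pushout.desc r 0 (by simp [h.w]) : pushout j a₂ ⟶ K) := by
    have : Epi (pushout.inl j a₂ ≫ pushout.desc r 0 (by simp [h.w])) := by
      rw [hinl]; infer_instance
    exact epi_of_epi (pushout.inl j a₂) _
  refine isSES_mk_coker (pushout.inr_desc _ _ _) inferInstance hepi ?_
  intro T t ht
  have hjt : j ≫ pushout.inl j a₂ ≫ t = 0 := by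
    rw [← assoc, pushout.condition, assoc, ht, comp_zero]
  obtain ⟨u, hu⟩ := h.desc (pushout.inl j a₂ ≫ t) (by rw [← assoc] at hjt ⊢; exact hjt)
  refine ⟨u, ?_⟩
  apply pushout.hom_ext
  · rw [← assoc, hinl, hu]
  · rw [← assoc, pushout.inr_desc, zero_comp, ht]

/-- The pushout-type universal property of the square `K → P`, `X₁ → D₁` built from
two SESs over the same cokernel `C₁`. -/
lemma square_desc {K P C₁ X₁ D₁ T : B} {ι : K ⟶ P} {π : P ⟶ C₁} {a : X₁ ⟶ D₁} {b : D₁ ⟶ C₁}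
    {φ : P ⟶ D₁} {ψ : K ⟶ X₁} (h₁ : IsSES ι π) (h₂ : IsSES a b)
    (hφ : φ ≫ b = π) (hψ : ψ ≫ a = ι ≫ φ)
    (u₁ : X₁ ⟶ T) (u₂ : P ⟶ T) (hu : ψ ≫ u₁ = ι ≫ u₂) :
    ∃ w : D₁ ⟶ T, a ≫ w = u₁ ∧ φ ≫ w = u₂ := by
  haveI := h₁.epi_g
  haveI := h₁.mono_f
  haveI := h₂.mono_f
  have hep : Epi (biprod.desc a φ) := by
    apply Preadditive.epi_of_cancel_zero
    intro R g hg
    have hag : a ≫ g = 0 := by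
      have h0 := biprod.inl ≫= hg
      simpa using h0
    have hφg : φ ≫ g = 0 := by
      have h0 := biprod.inr ≫= hg
      simpa using h0
    obtain ⟨w', hw'⟩ := h₂.desc g hag
    have hπw : π ≫ w' = 0 := by rw [← hφ, assoc, hw', hφg]
    have hw0 : w' = 0 := zero_of_epi_comp π hπw
    rw [← hw', hw0, comp_zero]
  have hker : kernel.ι (biprod.desc a φ) ≫ biprod.desc u₁ u₂ = 0 := by
    obtain ⟨k₁, k₂, hkdec⟩ :
        ∃ (k₁ : kernel (biprod.desc a φ) ⟶ X₁) (k₂ : kernel (biprod.desc a φ) ⟶ P),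
          kernel.ι (biprod.desc a φ) = biprod.lift k₁ k₂ :=
      ⟨kernel.ι _ ≫ biprod.fst, kernel.ι _ ≫ biprod.snd, by apply biprod.hom_ext <;> simp⟩
    have hkc : k₁ ≫ a + k₂ ≫ φ = 0 := by
      have h0 := kernel.condition (biprod.desc a φ)
      rwa [hkdec, biprod.lift_desc] at h0
    have hk₂π : k₂ ≫ π = 0 := by
      have h1 : (k₁ ≫ a + k₂ ≫ φ) ≫ b = 0 := by rw [hkc, zero_comp]
      rwa [Preadditive.add_comp, assoc, assoc, hφ, h₂.w, comp_zero, zero_add] at h1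
    obtain ⟨v, hv⟩ := h₁.lift k₂ hk₂π
    have hk₁v : (k₁ + v ≫ ψ) ≫ a = 0 := by
      rw [Preadditive.add_comp, assoc, hψ, ← assoc, hv, hkc]
    have hk₁neg : k₁ = -(v ≫ ψ) := by
      have h0 := zero_of_comp_mono a hk₁v
      rwa [add_eq_zero_iff_eq_neg] at h0
    rw [hkdec, biprod.lift_desc, hk₁neg, ← hv, Preadditive.neg_comp, assoc, assoc, ← hu]
    exact neg_add_cancel _
  haveI := hep
  refine ⟨Abelian.epiDesc (biprod.desc a φ) (biprod.desc u₁ u₂) hker, ?_, ?_⟩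
  · have h0 := biprod.inl ≫= Abelian.comp_epiDesc (biprod.desc a φ) (biprod.desc u₁ u₂) hker
    rwa [← assoc, biprod.inl_desc, biprod.inl_desc] at h0
  · have h0 := biprod.inr ≫= Abelian.comp_epiDesc (biprod.desc a φ) (biprod.desc u₁ u₂) hker
    rwa [← assoc, biprod.inr_desc, biprod.inr_desc] at h0

/-- If `Ext¹(C₁, C₂) = 0` then maps `K → C₂` extend along `K ↪ P` whenever `P/K ≅ C₁`. -/
lemma extend_of_ext1 {K P C₁ C₂ : B} {ι : K ⟶ P} {π : P ⟶ C₁} (h : IsSES ι π)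
    (hext : Ext1Zero C₁ C₂) (t : K ⟶ C₂) : ∃ t' : P ⟶ C₂, ι ≫ t' = t := by
  have hses := isSES_pushout h t
  obtain ⟨s, hs⟩ := hext _ _ hses
  obtain ⟨ρ, hρ⟩ := hses.retraction_of_section hs
  refine ⟨pushout.inl ι t ≫ ρ, ?_⟩
  rw [← assoc, pushout.condition, assoc, hρ, comp_id]

/-- Gluing: from a SES `X₂ → E → X₁`, a projective presentation `K → P → C₁`,
a SES `X₁ → D₁ → C₁`, compatible maps `φ, ψ` and a lift `lam` of `ψ` to `E`,
we get a SES `X₂ → F → D₁` with `X₂ → F` factoring through `E`. -/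
lemma glue_ses {X₂ E X₁ K P C₁ D₁ : B} {i : X₂ ⟶ E} {p : E ⟶ X₁} {ι : K ⟶ P} {π : P ⟶ C₁}
    {a : X₁ ⟶ D₁} {b : D₁ ⟶ C₁} {φ : P ⟶ D₁} {ψ : K ⟶ X₁} {lam : K ⟶ E}
    (h_ip : IsSES i p) (h_ιπ : IsSES ι π) (h_ab : IsSES a b)
    (hφ : φ ≫ b = π) (hψ : ψ ≫ a = ι ≫ φ) (hlam : lam ≫ p = ψ) :
    ∃ (F : B) (e : E ⟶ F) (ν : F ⟶ D₁), IsSES (i ≫ e) ν := by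
  haveI := h_ip.mono_f
  haveI := h_ip.epi_g
  haveI := h_ιπ.mono_f
  haveI := h_ιπ.epi_g
  haveI := h_ab.mono_f
  haveI := h_ab.epi_g
  obtain ⟨μ, hμ₁, hμ₂⟩ :
      ∃ μ : K ⟶ E ⊞ P, μ ≫ biprod.fst = -lam ∧ μ ≫ biprod.snd = ι :=
    ⟨biprod.lift (-lam) ι, by simp, by simp⟩
  have hμdec : ∀ {T : B} (x : E ⊞ P ⟶ T),
      μ ≫ x = -(lam ≫ biprod.inl ≫ x) + ι ≫ biprod.inr ≫ x := by
    intro T x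
    have hμeq : μ = biprod.lift (-lam) ι := by
      apply biprod.hom_ext
      · rw [biprod.lift_fst, hμ₁]
      · rw [biprod.lift_snd, hμ₂]
    have hx : x = biprod.desc (biprod.inl ≫ x) (biprod.inr ≫ x) := by
      apply biprod.hom_ext' <;> simp
    conv_lhs => rw [hμeq, hx, biprod.lift_desc]
    rw [Preadditive.neg_comp]
  obtain ⟨ν, hν₁, hν₂⟩ :
      ∃ ν : E ⊞ P ⟶ D₁, biprod.inl ≫ ν = p ≫ a ∧ biprod.inr ≫ ν = φ :=
    ⟨biprod.desc (p ≫ a) φ, by simp, by simp⟩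
  have hμmono : Mono μ := by
    haveI : Mono (μ ≫ biprod.snd) := by rw [hμ₂]; infer_instance
    exact mono_of_mono μ biprod.snd
  have hμν : μ ≫ ν = 0 := by
    rw [hμdec ν, hν₁, hν₂, ← hψ,
      show lam ≫ p ≫ a = ψ ≫ a from by rw [← assoc, hlam]]
    exact neg_add_cancel _
  obtain ⟨F, πF, hsesμ⟩ : ∃ (F : B) (πF : E ⊞ P ⟶ F), IsSES μ πF :=
    ⟨cokernel μ, cokernel.π μ, isSES_cokernel μ hμmono⟩
  haveI := hsesμ.epi_g
  obtain ⟨νb, hπν⟩ := hsesμ.desc ν hμν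
  refine ⟨F, biprod.inl ≫ πF, νb, ?_⟩
  have hw : (i ≫ biprod.inl ≫ πF) ≫ νb = 0 := by
    rw [assoc, assoc, hπν, hν₁, ← assoc, h_ip.w, zero_comp]
  have hmono : Mono (i ≫ biprod.inl ≫ πF) := by
    apply Preadditive.mono_of_cancel_zero
    intro T g hg
    have h1 : ((g ≫ i) ≫ biprod.inl) ≫ πF = 0 := by
      simpa only [assoc] using hg
    obtain ⟨v, hv⟩ := hsesμ.lift _ h1
    have hv2 : v ≫ ι = 0 := by
      have h2 := hv =≫ biprod.snd
      rw [assoc, hμ₂] at h2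
      rw [h2, assoc, biprod.inl_snd, comp_zero]
    have hv0 : v = 0 := zero_of_comp_mono ι hv2
    have h3 : (g ≫ i) ≫ (biprod.inl : E ⟶ E ⊞ P) = 0 := by rw [← hv, hv0, zero_comp]
    have h4 : g ≫ i = 0 := by
      have h5 := h3 =≫ biprod.fst
      rwa [assoc, biprod.inl_fst, comp_id, zero_comp] at h5
    exact zero_of_comp_mono i h4
  have hepi : Epi νb := by
    apply Preadditive.epi_of_cancel_zero
    intro R u hu
    have hν0 : ν ≫ u = 0 := by rw [← hπν, assoc, hu, comp_zero]
    have hpau : p ≫ a ≫ u = 0 := by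
      have h0 := biprod.inl ≫= hν0
      rwa [← assoc, hν₁, assoc, comp_zero] at h0
    have hau : a ≫ u = 0 := zero_of_epi_comp p hpau
    obtain ⟨w', hw'⟩ := h_ab.desc u hau
    have hπw : π ≫ w' = 0 := by
      have h0 := biprod.inr ≫= hν0
      rw [← assoc, hν₂, comp_zero] at h0
      rw [← hφ, assoc, hw', h0]
    have hw0 : w' = 0 := zero_of_epi_comp π hπw
    rw [← hw', hw0, comp_zero]
  refine isSES_mk_coker hw hmono hepi ?_
  intro T u hu
  obtain ⟨w₁, hw₁⟩ := h_ip.desc (biprod.inl ≫ πF ≫ u) (by simpa only [assoc] using hu)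
  have hμu : μ ≫ πF ≫ u = 0 := by rw [← assoc, hsesμ.w, zero_comp]
  have hrel : ψ ≫ w₁ = ι ≫ biprod.inr ≫ πF ≫ u := by
    have h0 := (hμdec (πF ≫ u)).symm
    rw [hμu] at h0
    have h1 : lam ≫ biprod.inl ≫ πF ≫ u = ψ ≫ w₁ := by
      rw [← hw₁, ← assoc, hlam]
    rw [h1] at h0
    rwa [neg_add_eq_zero] at h0
  obtain ⟨wm, hwa, hwφ⟩ := square_desc h_ιπ h_ab hφ hψ w₁ (biprod.inr ≫ πF ≫ u) hrel
  refine ⟨wm, ?_⟩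
  have hcomp : ν ≫ wm = πF ≫ u := by
    apply biprod.hom_ext'
    · rw [← assoc, hν₁, assoc, hwa, hw₁]
    · rw [← assoc, hν₂, hwφ]
  have h6 : πF ≫ νb ≫ wm = πF ≫ u := by rw [← assoc, hπν, hcomp]
  exact (cancel_epi πF).mp h6

end Aux

/-- if `Ext²(𝒞,𝒟) = 0`, then the right `𝒟`-mutation
`𝒞' = CoCone(𝒟,𝒞) ∩ 𝒟^⊥¹` is rigid. -/
theorem statement_18 {B : Type u} [Category.{v} B] [Abelian B]
    [EnoughProjectives B] [EnoughInjectives B]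
    (C D : Set B) (hC : RCP C) (hD : RCP D) (hDC : D ⊆ C)
    (hExt2 : ∀ ⦃X⦄, X ∈ C → ∀ ⦃Y⦄, Y ∈ D → Ext2Zero X Y) :
    Rigid (CoCone D C ∩ rightPerp D) := by
  rintro X₁ ⟨hX₁cc, hX₁perp⟩ X₂ ⟨hX₂cc, hX₂perp⟩ E i p h_ip
  obtain ⟨D₁, C₁, a, b, hD₁, hC₁, h_ab⟩ := hX₁cc
  obtain ⟨D₂, C₂, a₂, b₂, hD₂, hC₂, h_ab₂⟩ := hX₂cc
  haveI := h_ab.epi_g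
  haveI := h_ab₂.mono_f
  haveI := h_ab₂.epi_g
  haveI := h_ip.mono_f
  haveI := h_ip.epi_g
  -- a projective presentation of C₁
  obtain ⟨P, π, hproj, hπepi⟩ :
      ∃ (P : B) (π : P ⟶ C₁), Projective P ∧ Epi π :=
    ⟨Projective.over C₁, Projective.π C₁, inferInstance, inferInstance⟩
  obtain ⟨K, ι, h_ιπ⟩ : ∃ (K : B) (ι : K ⟶ P), IsSES ι π :=
    ⟨kernel π, kernel.ι π, isSES_kernel π hπepi⟩
  haveI := hproj
  obtain ⟨φ, hφ⟩ : ∃ φ : P ⟶ D₁, φ ≫ b = π :=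
    ⟨Projective.factorThru π b, Projective.factorThru_comp _ _⟩
  obtain ⟨ψ, hψ⟩ := h_ab.lift (ι ≫ φ) (by rw [assoc, hφ]; exact h_ιπ.w)
  -- Ext¹(K, D₂) = 0 by the Ext² hypothesis, Ext¹(C₁, C₂) = 0 by rigidity of C
  have hKD₂ : Ext1Zero K D₂ := hExt2 hC₁ hD₂ ι π hproj h_ιπ
  have hC₁C₂ : Ext1Zero C₁ C₂ := hC.rigid hC₁ hC₂
  -- Key sublemma : Ext¹(K, X₂) = 0
  have hKX₂ : Ext1Zero K X₂ := by
    intro G j r h_jr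
    haveI := h_jr.mono_f
    haveI := h_jr.epi_g
    have hsesH := isSES_pushout h_jr a₂
    obtain ⟨τ, hτ⟩ := hKD₂ _ _ hsesH
    obtain ⟨ρ', hρ'⟩ := hsesH.retraction_of_section hτ
    have hjt : j ≫ pushout.inl j a₂ ≫ ρ' ≫ b₂ = 0 := by
      rw [← assoc, pushout.condition, assoc,
        show pushout.inr j a₂ ≫ ρ' ≫ b₂ = b₂ from by rw [← assoc, hρ', id_comp],
        h_ab₂.w]
    obtain ⟨t, ht⟩ := h_jr.desc (pushout.inl j a₂ ≫ ρ' ≫ b₂) hjt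
    obtain ⟨t', ht'⟩ := extend_of_ext1 h_ιπ hC₁C₂ t
    obtain ⟨st, hst⟩ : ∃ st : P ⟶ D₂, st ≫ b₂ = t' :=
      ⟨Projective.factorThru t' b₂, Projective.factorThru_comp _ _⟩
    have hχ : (pushout.inl j a₂ ≫ ρ' - r ≫ ι ≫ st) ≫ b₂ = 0 := by
      rw [Preadditive.sub_comp, assoc, assoc, assoc,
        show ι ≫ st ≫ b₂ = t from by rw [hst, ht'],
        ht, sub_self]
    obtain ⟨ρ, hρ⟩ := h_ab₂.lift _ hχ
    have hjρ : j ≫ ρ = 𝟙 X₂ := by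
      have h0 : (j ≫ ρ) ≫ a₂ = 𝟙 X₂ ≫ a₂ := by
        rw [assoc, hρ, Preadditive.comp_sub, ← assoc, pushout.condition, assoc, hρ', comp_id,
          ← assoc, h_jr.w, zero_comp, sub_zero, id_comp]
      exact (cancel_mono a₂).mp h0
    exact h_jr.section_of_retraction hjρ
  -- lift ψ to E through the pullback
  have hsesG := isSES_pullback h_ip ψ
  obtain ⟨σ, hσ⟩ := hKX₂ _ _ hsesG
  have hlam : (σ ≫ pullback.fst p ψ) ≫ p = ψ := by
    rw [assoc, pullback.condition, ← assoc, hσ, id_comp]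
  -- glue to get a SES X₂ → F → D₁ and conclude using Ext¹(D₁, X₂) = 0
  obtain ⟨F, e, ν, hsesF⟩ := glue_ses h_ip h_ιπ h_ab hφ hψ hlam
  obtain ⟨sF, hsF⟩ := hX₂perp hD₁ _ _ hsesF
  obtain ⟨ρF, hρF⟩ := hsesF.retraction_of_section hsF
  have hret : i ≫ e ≫ ρF = 𝟙 X₂ := by rw [← assoc]; exact hρF
  exact h_ip.section_of_retraction hret

end CotorsionPaper
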